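/- For every pair of adjacent vertices u, v in the 4×4 Rook graph, the two common neighbors of u and v are adjacent to each other, so the subgraph induced on {u, v} ∪ (N(u) ∩ N(v)) has exactly 6 edges; whereas for every pair of adjacent vertices u, v in the Shrikhande graph, the two common neighbors of u and v are non-adjacent, so the corresponding induced subgraph has exactly 5 edges. Hence edge-centric ego-network intersection counts distinguish these two non-isomorphic strongly regular graphs with equal parameters (16, 6, 2, 2). -/

import Mathlib

/-- The 4×4 Rook graph: the box (Cartesian) product `K₄ □ K₄` of two complete graphs on
4 vertices. Its vertices are pairs `(a, b)` with `a b : Fin 4`, and `(a, b)` is adjacent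
to `(c, d)` iff (`a = c` and `b ≠ d`) or (`b = d` and `a ≠ c`). -/
def rookGraph : SimpleGraph (Fin 4 × Fin 4) where
  Adj x y := (x.1 = y.1 ∧ x.2 ≠ y.2) ∨ (x.2 = y.2 ∧ x.1 ≠ y.1)
  symm := by
    constructor
    rintro x y (⟨h1, h2⟩ | ⟨h1, h2⟩)
    · exact Or.inl ⟨h1.symm, h2.symm⟩
    · exact Or.inr ⟨h1.symm, h2.symm⟩
  loopless := by
    constructor
    rintro x (⟨-, h⟩ | ⟨-, h⟩) <;> exact h rfl

instance : DecidableRel rookGraph.Adj := fun x y =>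
  inferInstanceAs (Decidable ((x.1 = y.1 ∧ x.2 ≠ y.2) ∨ (x.2 = y.2 ∧ x.1 ≠ y.1)))

/-- The connection set of the Shrikhande graph:
`S = {(1,0), (−1,0), (0,1), (0,−1), (1,1), (−1,−1)} ⊆ (ZMod 4) × (ZMod 4)`. -/
def shrikhandeS : Finset (ZMod 4 × ZMod 4) :=
  {(1, 0), (-1, 0), (0, 1), (0, -1), (1, 1), (-1, -1)}

/-- The Shrikhande graph: the Cayley graph on the group `(ZMod 4) × (ZMod 4)` with
connection set `S = {(1,0), (−1,0), (0,1), (0,−1), (1,1), (−1,−1)}`; `x` is adjacent to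
`y` iff `x - y ∈ S`. -/
def shrikhandeGraph : SimpleGraph (ZMod 4 × ZMod 4) where
  Adj x y := x - y ∈ shrikhandeS
  symm := by
    constructor
    intro x y h
    have hxy : y - x = -(x - y) := (neg_sub x y).symm
    rw [hxy]
    revert h
    have : ∀ z ∈ shrikhandeS, -z ∈ shrikhandeS := by decide
    exact this (x - y)
  loopless := by
    constructor
    intro x h
    rw [sub_self] at h
    revert h
    decide

instance : DecidableRel shrikhandeGraph.Adj := fun x y =>
  inferInstanceAs (Decidable (x - y ∈ shrikhandeS))

/-- For adjacent `u, v` in the 4×4 Rook graph, the two common neighbors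
of `u` and `v` are adjacent to each other, and the subgraph induced on
`{u, v} ∪ (N(u) ∩ N(v))` has exactly 6 edges; whereas for adjacent `u, v` in the
Shrikhande graph, the two common neighbors are non-adjacent, and the corresponding
induced subgraph has exactly 5 edges. Hence edge-centric ego-network intersection counts
distinguish these two strongly regular graphs with equal parameters `(16, 6, 2, 2)`. -/
lemma rook_card : ∀ u v : Fin 4 × Fin 4, rookGraph.Adj u v →
    ((rookGraph.induce
        ({u, v} ∪ (rookGraph.neighborSet u ∩ rookGraph.neighborSet v))).edgeSet.toFinset.card
        = 6) := by decide

lemma shrikhande_card : ∀ u v : ZMod 4 × ZMod 4, shrikhandeGraph.Adj u v →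
    ((shrikhandeGraph.induce
        ({u, v} ∪ (shrikhandeGraph.neighborSet u ∩ shrikhandeGraph.neighborSet v))).edgeSet.toFinset.card
        = 5) := by decide

lemma rook_nbrs : ∀ u v : Fin 4 × Fin 4, rookGraph.Adj u v →
      (∀ w₁ ∈ rookGraph.neighborSet u ∩ rookGraph.neighborSet v,
        ∀ w₂ ∈ rookGraph.neighborSet u ∩ rookGraph.neighborSet v,
          w₁ ≠ w₂ → rookGraph.Adj w₁ w₂) := by decide

lemma shrikhande_nbrs : ∀ u v : ZMod 4 × ZMod 4, shrikhandeGraph.Adj u v →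
      (∀ w₁ ∈ shrikhandeGraph.neighborSet u ∩ shrikhandeGraph.neighborSet v,
        ∀ w₂ ∈ shrikhandeGraph.neighborSet u ∩ shrikhandeGraph.neighborSet v,
          w₁ ≠ w₂ → ¬ shrikhandeGraph.Adj w₁ w₂) := by decide

theorem rook_shrikhande_edge_counts :
    (∀ u v : Fin 4 × Fin 4, rookGraph.Adj u v →
      (∀ w₁ ∈ rookGraph.neighborSet u ∩ rookGraph.neighborSet v,
        ∀ w₂ ∈ rookGraph.neighborSet u ∩ rookGraph.neighborSet v,
          w₁ ≠ w₂ → rookGraph.Adj w₁ w₂) ∧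
      (rookGraph.induce
        ({u, v} ∪ (rookGraph.neighborSet u ∩ rookGraph.neighborSet v))).edgeSet.ncard
        = 6) ∧
    (∀ u v : ZMod 4 × ZMod 4, shrikhandeGraph.Adj u v →
      (∀ w₁ ∈ shrikhandeGraph.neighborSet u ∩ shrikhandeGraph.neighborSet v,
        ∀ w₂ ∈ shrikhandeGraph.neighborSet u ∩ shrikhandeGraph.neighborSet v,
          w₁ ≠ w₂ → ¬ shrikhandeGraph.Adj w₁ w₂) ∧
      (shrikhandeGraph.induce
        ({u, v} ∪ (shrikhandeGraph.neighborSet u ∩ shrikhandeGraph.neighborSet v))).edgeSet.ncard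
        = 5) := by
  constructor
  · intro u v h
    refine ⟨rook_nbrs u v h, ?_⟩
    rw [Set.ncard_eq_toFinset_card']
    exact rook_card u v h
  · intro u v h
    refine ⟨shrikhande_nbrs u v h, ?_⟩
    rw [Set.ncard_eq_toFinset_card']
    exact shrikhande_card u v h
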